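/- arXiv:1710.08120 — 2 statements merged into one kernel-verified Lean document; each statement's English description precedes it below -/
import Mathlib

section
/- If a bivariate survivor function satisfies P(X(s) > x, X(s+h) > x) = L_h(x) x^{-1/η(h)} with L_h slowly varying and marginals unit Fréchet, then the coefficient χ̄(h) = lim_{u→1⁻} [2 log P(F(X(s)) > u) / log P(F(X(s)) > u, F(X(s+h)) > u) - 1] equals 2η(h) - 1. -/
open MeasureTheory Filter

lemma uct (h : ℝ → ℝ) (hm : Measurable h)
    (hsv : ∀ c : ℝ, Tendsto (fun x => h (x + c) - h x) atTop (nhds 0))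
    {ε : ℝ} (hε : 0 < ε) :
    ∀ᶠ x in atTop, ∀ u ∈ Set.Icc (0:ℝ) 1, |h (x + u) - h x| ≤ ε := by
  by_contra hcon
  rw [Filter.not_eventually] at hcon
  have hseq : ∀ n : ℕ, ∃ x : ℝ, (n : ℝ) ≤ x ∧ ∃ u ∈ Set.Icc (0:ℝ) 1, ε < |h (x + u) - h x| := by
    intro n
    rcases Filter.frequently_atTop.mp hcon (n : ℝ) with ⟨x, hx, hP⟩
    push_neg at hP
    obtain ⟨u, hu, hgt⟩ := hP
    exact ⟨x, hx, u, hu, hgt⟩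
  choose x hxge u hu hgt using hseq
  set V : ℕ → Set ℝ := fun n =>
    Set.Icc (0:ℝ) 2 ∩ ⋂ m ∈ Set.Ici n, {t | |h (x m + t) - h (x m)| ≤ ε/3} with hVdef
  set W : ℕ → Set ℝ := fun n =>
    Set.Icc (0:ℝ) 2 ∩ ⋂ m ∈ Set.Ici n, {t | |h ((x m + u m) + t) - h (x m + u m)| ≤ ε/3} with hWdef
  have hmeas : ∀ (b : ℕ → ℝ) (n : ℕ), MeasurableSet
      (Set.Icc (0:ℝ) 2 ∩ ⋂ m ∈ Set.Ici n, {t | |h (b m + t) - h (b m)| ≤ ε/3}) := by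
    intro b n
    refine measurableSet_Icc.inter (MeasurableSet.biInter (Set.to_countable _) fun m _ => ?_)
    exact measurableSet_le (((hm.comp (measurable_const_add (b m))).sub measurable_const).abs)
      measurable_const
  have hVmeas : ∀ n, MeasurableSet (V n) := fun n => hmeas x n
  have hWmeas : ∀ n, MeasurableSet (W n) := fun n => hmeas (fun m => x m + u m) n
  have hmono : ∀ (b : ℕ → ℝ), Monotone (fun n =>
      Set.Icc (0:ℝ) 2 ∩ ⋂ m ∈ Set.Ici n, {t | |h (b m + t) - h (b m)| ≤ ε/3}) := by
    intro b n n' hn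
    refine Set.inter_subset_inter_right _ ?_
    exact Set.biInter_subset_biInter_left (Set.Ici_subset_Ici.mpr hn)
  have hcover : ∀ (b : ℕ → ℝ), (∀ m : ℕ, (m : ℝ) ≤ b m) →
      (⋃ n, Set.Icc (0:ℝ) 2 ∩ ⋂ m ∈ Set.Ici n, {t | |h (b m + t) - h (b m)| ≤ ε/3})
        = Set.Icc (0:ℝ) 2 := by
    intro b hb
    apply Set.Subset.antisymm
    · exact Set.iUnion_subset fun n => Set.inter_subset_left
    · intro t ht
      have h1 : ∀ᶠ x' in atTop, |h (x' + t) - h x'| < ε/3 := by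
        have h2 := (hsv t).abs
        rw [abs_zero] at h2
        exact h2.eventually_lt_const (by positivity)
      rcases eventually_atTop.mp h1 with ⟨X, hX⟩
      refine Set.mem_iUnion.mpr ⟨⌈X⌉₊, ht, Set.mem_iInter₂.mpr fun m hmge => ?_⟩
      have : X ≤ b m := le_trans (Nat.le_ceil X) (le_trans (Nat.cast_le.mpr hmge) (hb m))
      exact (hX (b m) this).le
  have hIcc2 : volume (Set.Icc (0:ℝ) 2) = ENNReal.ofReal 2 := by
    rw [Real.volume_Icc]; norm_num
  have hbig : ∀ (b : ℕ → ℝ), (∀ m : ℕ, (m : ℝ) ≤ b m) →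
      ∃ n : ℕ, ENNReal.ofReal (7/4) < volume
        (Set.Icc (0:ℝ) 2 ∩ ⋂ m ∈ Set.Ici n, {t | |h (b m + t) - h (b m)| ≤ ε/3}) := by
    intro b hb
    have htend := tendsto_measure_iUnion_atTop (μ := volume) (hmono b)
    rw [hcover b hb, hIcc2] at htend
    have hlt : ENNReal.ofReal (7/4) < ENNReal.ofReal 2 :=
      (ENNReal.ofReal_lt_ofReal_iff (by norm_num)).mpr (by norm_num)
    exact ((tendsto_order.1 htend).1 _ hlt).exists
  obtain ⟨n₁, hn₁⟩ := hbig x hxge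
  obtain ⟨n₂, hn₂⟩ := hbig (fun m => x m + u m)
    (fun m => le_trans (hxge m) (le_add_of_nonneg_right (hu m).1))
  set m := max n₁ n₂ with hm'
  set A : Set ℝ := V n₁ with hA
  set B : Set ℝ := (fun t => t + -(u m)) ⁻¹' (W n₂) with hB
  have hBmeas : MeasurableSet B := (hWmeas n₂).preimage (measurable_add_const _)
  have hvolB : volume B = volume (W n₂) := measure_preimage_add_right volume _ _
  have hsub : A ∪ B ⊆ Set.Icc (0:ℝ) 3 := by
    rintro t (htA | htB)
    · exact ⟨htA.1.1, le_trans htA.1.2 (by norm_num)⟩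
    · have h1 : t + -(u m) ∈ Set.Icc (0:ℝ) 2 := htB.1
      rw [Set.mem_Icc] at h1
      exact ⟨by linarith [(hu m).1], by linarith [(hu m).2]⟩
  -- A ∩ B is nonempty
  have hABne : (A ∩ B).Nonempty := by
    rcases Set.eq_empty_or_nonempty (A ∩ B) with hemp | hne
    · exfalso
      have hdisj : Disjoint A B := Set.disjoint_iff_inter_eq_empty.mpr hemp
      have hun : volume (A ∪ B) = volume A + volume B := measure_union hdisj hBmeas
      have hle : volume (A ∪ B) ≤ ENNReal.ofReal 3 := by
        calc volume (A ∪ B) ≤ volume (Set.Icc (0:ℝ) 3) := measure_mono hsub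
        _ = ENNReal.ofReal 3 := by rw [Real.volume_Icc]; norm_num
      have hgtA : ENNReal.ofReal (7/4) < volume A := hn₁
      have hgtB : ENNReal.ofReal (7/4) < volume B := by rw [hvolB]; exact hn₂
      have h72 : ENNReal.ofReal (7/4) + ENNReal.ofReal (7/4) = ENNReal.ofReal (7/2) := by
        rw [← ENNReal.ofReal_add (by norm_num) (by norm_num)]; norm_num
      have h33 : ENNReal.ofReal 3 < ENNReal.ofReal (7/2) :=
        (ENNReal.ofReal_lt_ofReal_iff (by norm_num)).mpr (by norm_num)
      have : volume (A ∪ B) < volume (A ∪ B) := by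
        calc volume (A ∪ B) ≤ ENNReal.ofReal 3 := hle
        _ < ENNReal.ofReal (7/2) := h33
        _ = ENNReal.ofReal (7/4) + ENNReal.ofReal (7/4) := h72.symm
        _ ≤ volume A + volume B := add_le_add hgtA.le hgtB.le
        _ = volume (A ∪ B) := hun.symm
      exact lt_irrefl _ this
    · exact hne
  obtain ⟨t, htA, htB⟩ := hABne
  have h1 : |h (x m + t) - h (x m)| ≤ ε/3 := by
    have := htA.2
    exact Set.mem_iInter₂.mp this m (Set.mem_Ici.mpr (le_max_left _ _))
  have h2 : |h ((x m + u m) + (t + -(u m))) - h (x m + u m)| ≤ ε/3 := by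
    have := htB.2
    exact Set.mem_iInter₂.mp this m (Set.mem_Ici.mpr (le_max_right _ _))
  have heq : (x m + u m) + (t + -(u m)) = x m + t := by ring
  rw [heq] at h2
  have h3 : ε < |h (x m + u m) - h (x m)| := hgt m
  have h4 : |h (x m + u m) - h (x m)| ≤ |h (x m + u m) - h (x m + t)| + |h (x m + t) - h (x m)| :=
    abs_sub_le _ _ _
  rw [abs_sub_comm (h (x m + u m)) (h (x m + t))] at h4
  linarith

lemma sv_div (h : ℝ → ℝ) (hm : Measurable h)
    (hsv : ∀ c : ℝ, Tendsto (fun x => h (x + c) - h x) atTop (nhds 0)) :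
    Tendsto (fun y => h y / y) atTop (nhds 0) := by
  rw [NormedAddCommGroup.tendsto_nhds_zero]
  intro ε hε
  obtain ⟨X₀, hX₀⟩ := eventually_atTop.mp (uct h hm hsv (by positivity : (0:ℝ) < ε/4))
  set X := max X₀ 0 with hXdef
  have hX : ∀ x ≥ X, ∀ u ∈ Set.Icc (0:ℝ) 1, |h (x + u) - h x| ≤ ε/4 :=
    fun x hx => hX₀ x (le_trans (le_max_left _ _) hx)
  have hX0 : 0 ≤ X := le_max_right _ _
  have claim : ∀ n : ℕ, ∀ y : ℝ, X + n ≤ y → y ≤ X + n + 1 → |h y - h X| ≤ ε/4 * (n+1) := by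
    intro n
    induction n with
    | zero =>
      intro y h1 h2
      have hu : y - X ∈ Set.Icc (0:ℝ) 1 := ⟨by push_cast at h1; linarith, by push_cast at h2; linarith⟩
      have := hX X le_rfl (y - X) hu
      rw [add_sub_cancel] at this
      push_cast
      linarith
    | succ n ih =>
      intro y h1 h2
      push_cast at h1 h2
      have hy1 : X + n ≤ y - 1 := by linarith
      have hy2 : y - 1 ≤ X + n + 1 := by linarith
      have hb := ih (y - 1) (by push_cast; linarith) (by push_cast; linarith)
      have hstep : |h ((y-1) + 1) - h (y-1)| ≤ ε/4 := by
        refine hX (y-1) (by linarith [Nat.cast_nonneg (α := ℝ) n]) 1 ⟨zero_le_one, le_rfl⟩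
      rw [sub_add_cancel] at hstep
      have := abs_sub_le (h y) (h (y-1)) (h X)
      push_cast
      linarith
  have claim2 : ∀ y : ℝ, X ≤ y → |h y| ≤ |h X| + ε/4 * (y - X + 1) := by
    intro y hy
    set n := ⌊y - X⌋₊ with hn
    have hn1 : (n : ℝ) ≤ y - X := Nat.floor_le (by linarith)
    have hn2 : y - X < n + 1 := Nat.lt_floor_add_one _
    have := claim n y (by linarith) (by linarith)
    have habs := abs_sub_abs_le_abs_sub (h y) (h X)
    have hmul : ε/4 * ((n:ℝ)+1) ≤ ε/4 * (y - X + 1) := by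
      apply mul_le_mul_of_nonneg_left (by linarith) (by positivity)
    calc |h y| ≤ |h X| + |h y - h X| := by
          have := abs_sub_le (h y) (h X) 0
          simp only [sub_zero] at this
          linarith [abs_sub_le (h y) (h X) (0:ℝ), abs_add_le (h y - h X) (h X)]
    _ ≤ |h X| + ε/4 * (y - X + 1) := by linarith
  have hconst : Tendsto (fun y : ℝ => |h X| / y) atTop (nhds 0) :=
    tendsto_const_nhds.div_atTop tendsto_id
  have hev1 : ∀ᶠ y : ℝ in atTop, |h X| / y < ε/4 := hconst.eventually_lt_const (by positivity)
  filter_upwards [hev1, eventually_ge_atTop (max X 1)] with y hy1 hy2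
  have hyX : X ≤ y := le_trans (le_max_left _ _) hy2
  have hy01 : (1:ℝ) ≤ y := le_trans (le_max_right _ _) hy2
  have hypos : (0:ℝ) < y := by linarith
  have hb := claim2 y hyX
  have : |h y| / y ≤ |h X| / y + ε/4 * (y - X + 1) / y := by
    rw [← add_div]
    gcongr
  have h5 : ε/4 * (y - X + 1) / y ≤ ε/4 + ε/4 := by
    rw [div_le_iff₀ hypos]
    ring_nf
    nlinarith [hX0]
  have h6 : ‖h y / y‖ = |h y| / y := by
    rw [Real.norm_eq_abs, abs_div, abs_of_pos hypos]
  rw [h6]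
  linarith

lemma slow_log (L : ℝ → ℝ) (hLmeas : Measurable L) (hLpos : ∀ᶠ x in atTop, 0 < L x)
    (hslow : ∀ t > (0:ℝ), Tendsto (fun x => L (t * x) / L x) atTop (nhds 1)) :
    Tendsto (fun x => Real.log (L x) / Real.log x) atTop (nhds 0) := by
  set h : ℝ → ℝ := fun y => Real.log (L (Real.exp y)) with hhdef
  have hm : Measurable h := Real.measurable_log.comp (hLmeas.comp Real.measurable_exp)
  have hsv : ∀ c : ℝ, Tendsto (fun y => h (y + c) - h y) atTop (nhds 0) := by
    intro c
    have h1 : Tendsto (fun y => L (Real.exp c * Real.exp y) / L (Real.exp y)) atTop (nhds 1) :=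
      (hslow _ (Real.exp_pos c)).comp Real.tendsto_exp_atTop
    have h2 : Tendsto (fun y => Real.log (L (Real.exp c * Real.exp y) / L (Real.exp y)))
        atTop (nhds 0) := by
      have h3 := ((Real.continuousAt_log one_ne_zero).tendsto.comp h1)
      simpa [Function.comp_def] using h3
    refine h2.congr' ?_
    have e1 : ∀ᶠ y : ℝ in atTop, 0 < L (Real.exp y) := Real.tendsto_exp_atTop.eventually hLpos
    have e2 : ∀ᶠ y : ℝ in atTop, 0 < L (Real.exp c * Real.exp y) := by
      have ht : Tendsto (fun y : ℝ => Real.exp c * Real.exp y) atTop atTop :=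
        Real.tendsto_exp_atTop.const_mul_atTop (Real.exp_pos c)
      exact ht.eventually hLpos
    filter_upwards [e1, e2] with y hy1 hy2
    rw [Real.log_div hy2.ne' hy1.ne']
    have : Real.exp (y + c) = Real.exp c * Real.exp y := by
      rw [Real.exp_add]; ring
    simp only [hhdef, this]
  have hdiv := (sv_div h hm hsv).comp Real.tendsto_log_atTop
  refine hdiv.congr' ?_
  filter_upwards [eventually_gt_atTop (0:ℝ)] with x hx
  simp only [Function.comp, hhdef, Real.exp_log hx]

lemma div_div_aux (a b c : ℝ) (hc : c ≠ 0) : (a/c)/(b/c) = a/b := by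
  rcases eq_or_ne b 0 with rfl | hb
  · simp
  · field_simp

lemma tendstoG (η : ℝ) (hη : 0 < η) (L : ℝ → ℝ) (hLmeas : Measurable L)
    (hLpos : ∀ᶠ x in atTop, 0 < L x)
    (hslow : ∀ t > (0:ℝ), Tendsto (fun x => L (t * x) / L x) atTop (nhds 1)) :
    Tendsto (fun x => 2 * Real.log (1 - Real.exp (-1/x)) / Real.log (L x * x ^ (-(1/η))) - 1)
      atTop (nhds (2*η - 1)) := by
  -- the rate function r x = (1 - exp(-1/x)) * x → 1
  have Hr : Tendsto (fun x => (1 - Real.exp (-1/x)) * x) atTop (nhds 1) := by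
    have hd : HasDerivAt Real.exp 1 0 := by simpa using Real.hasDerivAt_exp 0
    have hslope := hasDerivAt_iff_tendsto_slope.mp hd
    have hcomp : Tendsto (fun x : ℝ => -1/x) atTop (nhdsWithin (0:ℝ) {(0:ℝ)}ᶜ) := by
      rw [tendsto_nhdsWithin_iff]
      constructor
      · exact tendsto_const_nhds.div_atTop tendsto_id
      · filter_upwards [eventually_gt_atTop (0:ℝ)] with x hx
        simp only [Set.mem_compl_iff, Set.mem_singleton_iff]
        exact div_ne_zero (by norm_num) hx.ne'
    refine (hslope.comp hcomp).congr' ?_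
    filter_upwards [eventually_gt_atTop (0:ℝ)] with x hx
    have hxne : x ≠ 0 := hx.ne'
    simp only [Function.comp, slope_def_field, Real.exp_zero, sub_zero]
    field_simp
    ring
  have Hlogr : Tendsto (fun x => Real.log ((1 - Real.exp (-1/x)) * x)) atTop (nhds 0) := by
    have := (Real.continuousAt_log one_ne_zero).tendsto.comp Hr
    simpa [Function.comp_def] using this
  have Hrpos : ∀ᶠ x : ℝ in atTop, 0 < (1 - Real.exp (-1/x)) * x :=
    Hr.eventually_const_lt (by norm_num)
  have HN : Tendsto (fun x => Real.log (1 - Real.exp (-1/x)) / Real.log x) atTop (nhds (-1)) := by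
    have h0 := (Hlogr.div_atTop Real.tendsto_log_atTop).sub_const 1
    rw [zero_sub] at h0
    refine h0.congr' ?_
    filter_upwards [eventually_gt_atTop (1:ℝ), Hrpos] with x hx hrx
    have hx0 : (0:ℝ) < x := lt_trans one_pos hx
    have hlogx : Real.log x ≠ 0 := (Real.log_pos hx).ne'
    have h1e : (0:ℝ) < 1 - Real.exp (-1/x) := by nlinarith
    rw [Real.log_mul h1e.ne' hx0.ne', add_div, div_self hlogx]
    ring
  have HL := slow_log L hLmeas hLpos hslow
  have HD : Tendsto (fun x => Real.log (L x * x ^ (-(1/η))) / Real.log x) atTop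
      (nhds (-(1/η))) := by
    have h0 := HL.add (tendsto_const_nhds (x := -(1/η)) (f := atTop))
    rw [zero_add] at h0
    refine h0.congr' ?_
    filter_upwards [eventually_gt_atTop (1:ℝ), hLpos] with x hx hLx
    have hx0 : (0:ℝ) < x := lt_trans one_pos hx
    have hlogx : Real.log x ≠ 0 := (Real.log_pos hx).ne'
    rw [Real.log_mul hLx.ne' (Real.rpow_pos_of_pos hx0 _).ne', Real.log_rpow hx0, add_div,
      mul_div_assoc, div_self hlogx, mul_one]
  have hne : -(1/η) ≠ 0 := neg_ne_zero.mpr (one_div_ne_zero hη.ne')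
  have Hmain := ((HN.div HD hne).const_mul 2).sub_const 1
  have hval : 2 * ((-1 : ℝ) / (-(1/η))) - 1 = 2*η - 1 := by
    rw [neg_div_neg_eq, one_div_one_div]
  rw [hval] at Hmain
  refine Hmain.congr' ?_
  filter_upwards [eventually_gt_atTop (1:ℝ)] with x hx
  have hlogx : Real.log x ≠ 0 := (Real.log_pos hx).ne'
  simp only [Pi.div_apply]
  rw [div_div_aux _ _ _ hlogx, mul_div_assoc]

/-- Ledford–Tawn model: if the bivariate survivor function satisfies
`P(X(s) > x, X(s+h) > x) = L_h(x) x^{-1/η}` with `L_h` slowly varying and unit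
Fréchet margins, then `χ̄(h) = 2η - 1`. -/
theorem chibar_eq_two_eta_sub_one
    {Ω : Type*} [MeasurableSpace Ω] (μ : Measure Ω) [IsProbabilityMeasure μ]
    (η : ℝ) (hη : η ∈ Set.Ioc (0 : ℝ) 1)
    (X1 X2 : Ω → ℝ) (hX1 : Measurable X1) (hX2 : Measurable X2)
    (hpos : ∀ ω, 0 < X1 ω ∧ 0 < X2 ω)
    (F : ℝ → ℝ) (hF : ∀ x, 0 < x → F x = Real.exp (-1 / x))
    (hmarg1 : ∀ x > (0 : ℝ), μ {ω | X1 ω ≤ x} = ENNReal.ofReal (Real.exp (-1 / x)))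
    (hmarg2 : ∀ x > (0 : ℝ), μ {ω | X2 ω ≤ x} = ENNReal.ofReal (Real.exp (-1 / x)))
    (L : ℝ → ℝ) (hLmeas : Measurable L) (hLpos : ∀ᶠ x in atTop, 0 < L x)
    (hslow : ∀ t > (0 : ℝ), Tendsto (fun x => L (t * x) / L x) atTop (nhds 1))
    (hsurv : ∀ᶠ x in atTop,
      (μ {ω | x < X1 ω ∧ x < X2 ω}).toReal = L x * x ^ (-(1 / η))) :
    Tendsto (fun u : ℝ =>
        2 * Real.log ((μ {ω | u < F (X1 ω)}).toReal) /
            Real.log ((μ {ω | u < F (X1 ω) ∧ u < F (X2 ω)}).toReal) - 1)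
      (nhdsWithin 1 (Set.Iio 1)) (nhds (2 * η - 1)) := by
  obtain ⟨hη0, hη1⟩ := hη
  set φ : ℝ → ℝ := fun u => -1 / Real.log u with hφ
  have hc01 : ∀ᶠ u in nhdsWithin (1:ℝ) (Set.Iio 1), u ∈ Set.Ioo (0:ℝ) 1 := by
    have h1 : ∀ᶠ u in nhdsWithin (1:ℝ) (Set.Iio 1), u ∈ Set.Iio (1:ℝ) :=
      eventually_mem_nhdsWithin
    have h2 : ∀ᶠ u in nhdsWithin (1:ℝ) (Set.Iio 1), 0 < u :=
      Filter.Eventually.filter_mono nhdsWithin_le_nhds (eventually_gt_nhds zero_lt_one)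
    filter_upwards [h1, h2] with u a b
    exact ⟨b, a⟩
  have heqφ : ∀ u : ℝ, φ u = (-Real.log u)⁻¹ := by
    intro u
    simp [hφ, neg_div, one_div, inv_neg]
  have hφtop : Tendsto φ (nhdsWithin 1 (Set.Iio 1)) atTop := by
    have hlog : Tendsto (fun u => -Real.log u) (nhdsWithin 1 (Set.Iio 1))
        (nhdsWithin (0:ℝ) (Set.Ioi 0)) := by
      rw [tendsto_nhdsWithin_iff]
      constructor
      · have h3 : Tendsto Real.log (nhdsWithin 1 (Set.Iio 1)) (nhds (Real.log 1)) :=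
          ((Real.continuousAt_log one_ne_zero).tendsto).mono_left nhdsWithin_le_nhds
        rw [Real.log_one] at h3
        simpa using h3.neg
      · filter_upwards [hc01] with u hu
        exact neg_pos.mpr (Real.log_neg hu.1 hu.2)
    refine (tendsto_inv_nhdsGT_zero.comp hlog).congr ?_
    intro u
    exact (heqφ u).symm
  -- key pointwise facts
  refine ((tendstoG η hη0 L hLmeas hLpos hslow).comp hφtop).congr' ?_
  filter_upwards [hc01, hφtop.eventually hsurv] with u hu hs
  have hlogu : Real.log u < 0 := Real.log_neg hu.1 hu.2
  have hφpos : 0 < φ u := by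
    rw [heqφ u]
    exact inv_pos.mpr (neg_pos.mpr hlogu)
  have hm1 : -1 / φ u = Real.log u := by
    rw [heqφ u, div_inv_eq_mul]
    ring
  have hexpu : Real.exp (-1 / φ u) = u := by rw [hm1, Real.exp_log hu.1]
  have key : ∀ x : ℝ, 0 < x → (u < F x ↔ φ u < x) := by
    intro x hx
    rw [hF x hx, ← Real.log_lt_iff_lt_exp hu.1, lt_div_iff₀ hx]
    show Real.log u * x < -1 ↔ -1 / Real.log u < x
    rw [div_lt_iff_of_neg hlogu, mul_comm]
  have hsetN : {ω | u < F (X1 ω)} = {ω | φ u < X1 ω} :=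
    Set.ext fun ω => key (X1 ω) (hpos ω).1
  have hsetD : {ω | u < F (X1 ω) ∧ u < F (X2 ω)} = {ω | φ u < X1 ω ∧ φ u < X2 ω} :=
    Set.ext fun ω => and_congr (key (X1 ω) (hpos ω).1) (key (X2 ω) (hpos ω).2)
  have hmu : μ {ω | X1 ω ≤ φ u} = ENNReal.ofReal u := by
    rw [hmarg1 _ hφpos, hexpu]
  have hcomplN : {ω | φ u < X1 ω} = {ω | X1 ω ≤ φ u}ᶜ := by
    ext ω; simp [not_le]
  have hmeasN : MeasurableSet {ω | X1 ω ≤ φ u} := hX1 measurableSet_Iic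
  have hmN : (μ {ω | φ u < X1 ω}).toReal = 1 - u := by
    rw [hcomplN, measure_compl hmeasN (measure_ne_top μ _), measure_univ, hmu,
      ENNReal.toReal_sub_of_le (ENNReal.ofReal_le_one.mpr hu.2.le) ENNReal.one_ne_top,
      ENNReal.toReal_one, ENNReal.toReal_ofReal hu.1.le]
  simp only [Function.comp]
  rw [hsetN, hsetD, hmN, hs, hexpu]
end

section
/- Under the assumptions of the least-squares consistency theorem, if additionally the map ψ ↦ (ν(h,ψ))_{h∈H} is injective on Ψ, then ψ̂_N → ψ₀ almost surely as N → ∞. -/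
open MeasureTheory Filter

/-- Deterministic part: if the "population criterion" evaluated along a sequence in a
compact set tends to `0`, and it vanishes only at `ψ₀` (by injectivity), then the sequence
converges to `ψ₀`. -/
lemma aux_tendsto_of_criterion {d : ℕ} {ι : Type*} [Fintype ι]
    (Ψ : Set (Fin d → ℝ)) (hΨ : IsCompact Ψ)
    (ψ₀ : Fin d → ℝ) (hψ₀ : ψ₀ ∈ Ψ)
    (ν : ι → (Fin d → ℝ) → ℝ) (hν : ∀ h, ContinuousOn (ν h) Ψ)
    (hinj : Set.InjOn (fun ψ => (fun h : ι => ν h ψ)) Ψ)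
    (x : ℕ → Fin d → ℝ) (hx : ∀ N, x N ∈ Ψ)
    (hg : Tendsto (fun N => ∑ h : ι, (ν h ψ₀ - ν h (x N)) ^ 2) atTop (nhds 0)) :
    Tendsto x atTop (nhds ψ₀) := by
  set g : (Fin d → ℝ) → ℝ := fun ψ => ∑ h : ι, (ν h ψ₀ - ν h ψ) ^ 2 with hgdef
  have hgcont : ContinuousOn g Ψ := by
    apply continuousOn_finset_sum
    intro h _
    exact ((continuousOn_const.sub (hν h)).pow 2)
  have hgzero : ∀ ψ ∈ Ψ, g ψ = 0 → ψ = ψ₀ := by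
    intro ψ hψ h0
    have hterm : ∀ h : ι, (ν h ψ₀ - ν h ψ) ^ 2 = 0 := by
      have := (Finset.sum_eq_zero_iff_of_nonneg
        (fun h _ => sq_nonneg (ν h ψ₀ - ν h ψ))).1 h0
      intro h; exact this h (Finset.mem_univ h)
    have heq : (fun h : ι => ν h ψ) = fun h : ι => ν h ψ₀ := by
      funext h
      have := pow_eq_zero_iff (n := 2) (by norm_num) |>.1 (hterm h)
      have := sub_eq_zero.1 this
      linarith
    exact hinj hψ hψ₀ heq
  rw [tendsto_nhds]
  intro U hUopen hU
  by_cases hK : (Ψ \ U).Nonempty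
  · have hKc : IsCompact (Ψ \ U) := hΨ.diff hUopen
    obtain ⟨z, hzK, hzmin⟩ := hKc.exists_isMinOn hK (hgcont.mono Set.diff_subset)
    have hzpos : 0 < g z := by
      rcases lt_or_eq_of_le (Finset.sum_nonneg fun h _ => sq_nonneg (ν h ψ₀ - ν h z)) with h | h
      · exact h
      · exfalso
        have := hgzero z hzK.1 h.symm
        exact hzK.2 (this ▸ hU)
    have hev : ∀ᶠ N in atTop, g (x N) < g z := hg.eventually (Filter.Tendsto.eventually_lt_const hzpos tendsto_id) |>.mono (fun N hN => hN)
    filter_upwards [hev] with N hN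
    by_contra hnot
    have : x N ∈ Ψ \ U := ⟨hx N, hnot⟩
    exact absurd (hzmin this) (not_le.2 hN)
  · push_neg at hK
    have : Ψ ⊆ U := by
      intro y hy
      by_contra hyn
      exact (Set.not_nonempty_iff_eq_empty.2 hK) ⟨y, hy, hyn⟩
    exact Eventually.of_forall fun N => this (hx N)

/-- If moreover `ψ ↦ (ν(h,ψ))_{h∈H}` is injective on `Ψ`, then the
least-squares madogram estimator converges almost surely: `ψ̂_N → ψ₀`. -/
theorem least_squares_madogram_consistent
    {Ω : Type*} [MeasurableSpace Ω] (μ : Measure Ω) [IsProbabilityMeasure μ]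
    {ι : Type*} [Fintype ι] {d : ℕ}
    (Ψ : Set (Fin d → ℝ)) (hΨ : IsCompact Ψ)
    (ψ₀ : Fin d → ℝ) (hψ₀ : ψ₀ ∈ Ψ)
    (ν : ι → (Fin d → ℝ) → ℝ) (hν : ∀ h, ContinuousOn (ν h) Ψ)
    (ε : ℕ → Ω → ι → ℝ) (hεmeas : ∀ k, Measurable (ε k))
    (hindep : ProbabilityTheory.iIndepFun ε μ)
    (hident : ∀ k, ProbabilityTheory.IdentDistrib (ε k) (ε 0) μ μ)
    (hint : ∀ h, Integrable (fun ω => ε 0 ω h) μ)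
    (hmean : ∀ h, ∫ ω, ε 0 ω h ∂μ = 0)
    (hvar : ∀ h, Integrable (fun ω => (ε 0 ω h) ^ 2) μ)
    (L : ℕ → (Fin d → ℝ) → Ω → ℝ)
    (hL : ∀ N ψ ω, L N ψ ω =
      ∑ h : ι, (1 / (N : ℝ)) *
        ∑ k ∈ Finset.range N, ((ν h ψ₀ + ε k ω h) - ν h ψ) ^ 2)
    (ψhat : ℕ → Ω → Fin d → ℝ)
    (hmin : ∀ N ω, ψhat N ω ∈ Ψ ∧ ∀ ψ ∈ Ψ, L N (ψhat N ω) ω ≤ L N ψ ω)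
    (hinj : Set.InjOn (fun ψ => (fun h : ι => ν h ψ)) Ψ) :
    ∀ᵐ ω ∂μ, Tendsto (fun N => ψhat N ω) atTop (nhds ψ₀) := by
  -- strong law of large numbers for each coordinate h
  have slln : ∀ h : ι, ∀ᵐ ω ∂μ,
      Tendsto (fun n : ℕ => (∑ k ∈ Finset.range n, ε k ω h) / n) atTop (nhds 0) := by
    intro h
    have hpind : Pairwise (Function.onFun (ProbabilityTheory.IndepFun · · μ) (fun k => fun ω => ε k ω h)) := by
      intro i j hij
      exact (hindep.indepFun hij).comp (measurable_pi_apply h) (measurable_pi_apply h)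
    have hid : ∀ i, ProbabilityTheory.IdentDistrib (fun ω => ε i ω h) (fun ω => ε 0 ω h) μ μ :=
      fun i => (hident i).comp (measurable_pi_apply h)
    have := ProbabilityTheory.strong_law_ae_real (fun k ω => ε k ω h) (hint h) hpind hid
    simpa [hmean h] using this
  have sllnall : ∀ᵐ ω ∂μ, ∀ h : ι,
      Tendsto (fun n : ℕ => (∑ k ∈ Finset.range n, ε k ω h) / n) atTop (nhds 0) :=
    (ae_all_iff).2 slln
  -- uniform bound on |ν h ψ₀ - ν h ψ| over Ψ
  have hbound : ∀ h : ι, ∃ C : ℝ, ∀ ψ ∈ Ψ, |ν h ψ₀ - ν h ψ| ≤ C := by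
    intro h
    obtain ⟨C, hC⟩ := hΨ.exists_bound_of_continuousOn (continuousOn_const.sub (hν h))
    exact ⟨C, fun ψ hψ => hC ψ hψ⟩
  choose C hC using hbound
  filter_upwards [sllnall] with ω hS
  set S : ℕ → ι → ℝ := fun N h => (∑ k ∈ Finset.range N, ε k ω h) / N with hSdef
  -- key algebraic identity
  have key : ∀ ψ, ∀ N : ℕ, 1 ≤ N → L N ψ ω - L N ψ₀ ω
      = ∑ h : ι, ((ν h ψ₀ - ν h ψ) ^ 2 + 2 * (ν h ψ₀ - ν h ψ) * S N h) := by
    intro ψ N hN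
    have hN0 : (N : ℝ) ≠ 0 := Nat.cast_ne_zero.2 (by omega)
    rw [hL, hL, ← Finset.sum_sub_distrib]
    refine Finset.sum_congr rfl fun h _ => ?_
    rw [← mul_sub, ← Finset.sum_sub_distrib]
    have hterm : ∀ k ∈ Finset.range N,
        ((ν h ψ₀ + ε k ω h) - ν h ψ) ^ 2 - ((ν h ψ₀ + ε k ω h) - ν h ψ₀) ^ 2
        = (ν h ψ₀ - ν h ψ) ^ 2 + 2 * (ν h ψ₀ - ν h ψ) * ε k ω h := fun k _ => by ring
    rw [Finset.sum_congr rfl hterm, Finset.sum_add_distrib, Finset.sum_const,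
      Finset.card_range, ← Finset.mul_sum]
    simp only [hSdef]
    field_simp
    ring
  -- criterion tends to zero by squeeze
  have hupper : ∀ᶠ N in atTop,
      ∑ h : ι, (ν h ψ₀ - ν h (ψhat N ω)) ^ 2 ≤ ∑ h : ι, 2 * C h * |S N h| := by
    filter_upwards [eventually_ge_atTop 1] with N hN
    have hk := key (ψhat N ω) N hN
    have hle : L N (ψhat N ω) ω - L N ψ₀ ω ≤ 0 :=
      sub_nonpos.2 ((hmin N ω).2 ψ₀ hψ₀)
    rw [hk, Finset.sum_add_distrib] at hle
    have h1 : ∑ h : ι, (ν h ψ₀ - ν h (ψhat N ω)) ^ 2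
        ≤ -∑ h : ι, 2 * (ν h ψ₀ - ν h (ψhat N ω)) * S N h := by linarith
    refine h1.trans ?_
    rw [← Finset.sum_neg_distrib]
    refine Finset.sum_le_sum fun h _ => ?_
    have habs : |2 * (ν h ψ₀ - ν h (ψhat N ω)) * S N h| ≤ 2 * C h * |S N h| := by
      rw [abs_mul, abs_mul, abs_two]
      have := hC h (ψhat N ω) (hmin N ω).1
      have hSnn : (0:ℝ) ≤ |S N h| := abs_nonneg _
      nlinarith [abs_nonneg (ν h ψ₀ - ν h (ψhat N ω))]
    exact (neg_le_abs _).trans habs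
  have hlower : ∀ᶠ N in atTop, (0:ℝ) ≤ ∑ h : ι, (ν h ψ₀ - ν h (ψhat N ω)) ^ 2 :=
    Eventually.of_forall fun N => Finset.sum_nonneg fun h _ => sq_nonneg _
  have hrhs : Tendsto (fun N => ∑ h : ι, 2 * C h * |S N h|) atTop (nhds 0) := by
    have : Tendsto (fun N => ∑ h : ι, 2 * C h * |S N h|) atTop
        (nhds (∑ h : ι, 2 * C h * |(0:ℝ)|)) := by
      apply tendsto_finset_sum
      intro h _
      exact (tendsto_const_nhds.mul ((hS h).abs))
    simpa using this
  have hg : Tendsto (fun N => ∑ h : ι, (ν h ψ₀ - ν h (ψhat N ω)) ^ 2) atTop (nhds 0) :=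
    squeeze_zero' hlower hupper hrhs
  exact aux_tendsto_of_criterion Ψ hΨ ψ₀ hψ₀ ν hν hinj (fun N => ψhat N ω)
    (fun N => (hmin N ω).1) hg
end
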